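/- Let 0 < p₀ ≤ p₁ ≤ 1 and let Φ : (0,∞) → (0,∞) be a strictly increasing continuous bijection of type (p₀, p₁), i.e. Φ(st) ≤ C t^{p₀} Φ(s) for t ∈ (0,1] and Φ(st) ≤ C t^{p₁} Φ(s) for t ∈ [1,∞), for all s > 0. Define ρ(t) = t⁻¹/Φ⁻¹(t⁻¹). Then ρ is of upper type 1/p₀ − 1, i.e., there is a constant C' > 0 such that ρ(st) ≤ C' t^{1/p₀ − 1} ρ(s) for all t ∈ [1,∞) and s ∈ (0,∞). -/

import Mathlib

open Real

/-- Let `0 < p₀ ≤ p₁ ≤ 1` and let `Φ : (0,∞) → (0,∞)` be a strictly increasing continuous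
bijection (with two-sided inverse `Φinv`) of type `(p₀, p₁)`, i.e. `Φ (s*t) ≤ C t^{p₀} Φ s`
for `t ∈ (0,1]` and `Φ (s*t) ≤ C t^{p₁} Φ s` for `t ∈ [1,∞)`, for all `s > 0`. Let
`ρ t = t⁻¹ / Φinv t⁻¹`. Then `ρ` is of upper type `1/p₀ - 1`: there is `C' > 0` with
`ρ (s*t) ≤ C' * t^(1/p₀ - 1) * ρ s` for all `t ∈ [1,∞)` and `s ∈ (0,∞)`. -/
theorem stmt6 (Φ Φinv : ℝ → ℝ) (p₀ p₁ C : ℝ)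
    (hp₀ : 0 < p₀) (hp₀₁ : p₀ ≤ p₁) (hp₁ : p₁ ≤ 1) (hC : 0 < C)
    (hpos : ∀ t, 0 < t → 0 < Φ t) (hinvpos : ∀ t, 0 < t → 0 < Φinv t)
    (hmono : StrictMonoOn Φ (Set.Ioi 0)) (hcont : ContinuousOn Φ (Set.Ioi 0))
    (hleft : ∀ t, 0 < t → Φinv (Φ t) = t) (hright : ∀ t, 0 < t → Φ (Φinv t) = t)
    (hlow : ∀ t, 0 < t → t ≤ 1 → ∀ s, 0 < s → Φ (s * t) ≤ C * t ^ p₀ * Φ s)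
    (hup : ∀ t, 1 ≤ t → ∀ s, 0 < s → Φ (s * t) ≤ C * t ^ p₁ * Φ s) :
    ∃ C' : ℝ, 0 < C' ∧ ∀ t, 1 ≤ t → ∀ s, 0 < s →
      (s * t)⁻¹ / Φinv (s * t)⁻¹ ≤ C' * t ^ (1 / p₀ - 1) * (s⁻¹ / Φinv s⁻¹) := by
  have hC1 : 1 ≤ C := by
    have h := hlow 1 one_pos le_rfl 1 one_pos
    have h1 := hpos 1 one_pos
    rw [mul_one, Real.one_rpow, mul_one] at h
    nlinarith
  refine ⟨C ^ (1/p₀), Real.rpow_pos_of_pos hC _, ?_⟩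
  intro t ht s hs
  have htpos : (0:ℝ) < t := lt_of_lt_of_le one_pos ht
  have hu : 0 < (s*t)⁻¹ := by positivity
  set a := Φinv (s*t)⁻¹ with ha
  have hapos : 0 < a := hinvpos _ hu
  have hΦa : Φ a = (s*t)⁻¹ := hright _ hu
  set l := (C*t) ^ (1/p₀) with hl
  have hCt : (1:ℝ) ≤ C*t := by nlinarith
  have hlpos : 0 < l := Real.rpow_pos_of_pos (by positivity) _
  have hl1 : 1 ≤ l := by
    calc (1:ℝ) = 1 ^ (1/p₀) := (Real.one_rpow _).symm
    _ ≤ l := Real.rpow_le_rpow zero_le_one hCt (by positivity)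
  have hlp : l ^ p₀ = C * t := by
    rw [hl, ← Real.rpow_mul (by positivity : (0:ℝ) ≤ C*t),
      one_div_mul_cancel hp₀.ne', Real.rpow_one]
  -- lower type at (l*a, l⁻¹)
  have h2 := hlow l⁻¹ (by positivity) (inv_le_one_of_one_le₀ hl1) (l * a) (by positivity)
  rw [show l * a * l⁻¹ = a by field_simp] at h2
  have hinvp : l⁻¹ ^ p₀ = (C*t)⁻¹ := by
    rw [Real.inv_rpow hlpos.le, hlp]
  rw [hinvp] at h2
  -- hence s⁻¹ ≤ Φ (l*a)
  have hkey : s⁻¹ ≤ Φ (l * a) := by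
    have hΦla : 0 < Φ (l * a) := hpos _ (by positivity)
    have h4 : (s*t)⁻¹ ≤ C * (C*t)⁻¹ * Φ (l*a) := hΦa ▸ h2
    have h5 : C * (C*t)⁻¹ = t⁻¹ := by field_simp
    rw [h5, mul_inv] at h4
    calc s⁻¹ = t * (s⁻¹ * t⁻¹) := by field_simp
    _ ≤ t * (t⁻¹ * Φ (l*a)) := mul_le_mul_of_nonneg_left h4 htpos.le
    _ = Φ (l*a) := by field_simp
  -- hence Φinv s⁻¹ ≤ l * a
  have hle : Φinv s⁻¹ ≤ l * a := by
    have h3 : Φ (Φinv s⁻¹) ≤ Φ (l * a) := by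
      rw [hright _ (by positivity : (0:ℝ) < s⁻¹)]; exact hkey
    exact (hmono.le_iff_le (Set.mem_Ioi.mpr (hinvpos _ (by positivity)))
      (Set.mem_Ioi.mpr (by positivity))).mp h3
  have hinvspos : 0 < Φinv s⁻¹ := hinvpos _ (by positivity)
  -- final arithmetic
  have heq : (s * t)⁻¹ / a = C ^ (1/p₀) * t ^ (1/p₀ - 1) * (s⁻¹ / (l * a)) := by
    have hlsplit : l = C ^ (1/p₀) * t ^ (1/p₀) := Real.mul_rpow hC.le htpos.le
    have htsplit : t ^ (1/p₀ - 1) = t ^ (1/p₀) / t := by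
      rw [Real.rpow_sub htpos, Real.rpow_one]
    have hA : (0:ℝ) < t ^ (1/p₀) := Real.rpow_pos_of_pos htpos _
    have hB : (0:ℝ) < C ^ (1/p₀) := Real.rpow_pos_of_pos hC _
    rw [hlsplit, htsplit]
    field_simp
  rw [heq]
  apply mul_le_mul_of_nonneg_left _ (by positivity)
  apply div_le_div_of_nonneg_left (by positivity) hinvspos hle
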